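/- For every y > 0 there exists θ ∈ [-1, 1] such that ∫₀^y (sin t / t)² dt = π/2 - 1/(2y) + θ/(4y²). -/

import Mathlib

open Real

section TailSinAux

open MeasureTheory Set Filter Topology

/-- Integrability of `x * exp (-(b*x))` on `(0,∞)`. -/
lemma intOn_id_exp {b : ℝ} (hb : 0 < b) :
    IntegrableOn (fun x : ℝ => x * exp (-(b * x))) (Ioi 0) := by
  refine Integrable.mono' (((exp_neg_integrableOn_Ioi 0 (half_pos hb)).const_mul (2 / b))) ?_ ?_
  · exact ((continuous_id.mul ((continuous_const.mul continuous_id).neg.rexp)).aestronglyMeasurable).restrict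
  · filter_upwards [ae_restrict_mem measurableSet_Ioi] with x hx
    have hx0 : (0:ℝ) < x := hx
    have h1 : b * x / 2 + 1 ≤ exp (b * x / 2) := add_one_le_exp _
    have h2 : exp (-(b * x)) = exp (-(b * x / 2)) * exp (-(b * x / 2)) := by
      rw [← exp_add]; ring_nf
    have h3 : exp (-(b * x / 2)) * exp (b * x / 2) = 1 := by rw [← exp_add]; simp
    have h4 : (0:ℝ) < exp (-(b * x / 2)) := exp_pos _
    have h5 : (0:ℝ) < exp (b * x / 2) := exp_pos _
    rw [Real.norm_eq_abs, abs_of_nonneg (by positivity)]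
    have key : x * exp (-(b * x)) ≤ 2 / b * exp (-(b * x / 2)) := by
      rw [h2, div_mul_eq_mul_div, le_div_iff₀ hb]
      nlinarith [mul_pos hx0 h4, mul_pos h4 h5, mul_pos (mul_pos hx0 h4) h4]
    have : -(b / 2) * x = -(b * x / 2) := by ring
    rw [this]
    exact key

/-- `∫ x in (0,∞), x * exp (-(b*x)) = 1/b²`. -/
lemma int_id_exp {b : ℝ} (hb : 0 < b) :
    ∫ x in Ioi (0:ℝ), x * exp (-(b * x)) = 1 / b ^ 2 := by
  have h := Real.integral_rpow_mul_exp_neg_mul_Ioi (a := 2) (by norm_num) hb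
  rw [show ((2:ℝ) - 1) = 1 by norm_num] at h
  simp_rw [Real.rpow_one] at h
  rw [h, Real.Gamma_two, mul_one, show ((1:ℝ)/b) ^ (2:ℝ) = ((1:ℝ)/b) ^ (2:ℕ) by
    rw [← Real.rpow_natCast]; norm_num]
  rw [div_pow, one_pow]

/-- Closed form for `∫ t in (y,∞), exp (-(b*t)) * sin t ^ 2`. -/
lemma int_exp_sin_sq {b : ℝ} (hb : 0 < b) (y : ℝ) :
    ∫ t in Ioi y, exp (-(b * t)) * sin t ^ 2
      = exp (-(b * y)) * (1 / (2 * b) - (b * cos (2 * y) - 2 * sin (2 * y)) / (2 * (b ^ 2 + 4))) := by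
  set F : ℝ → ℝ := fun t =>
    exp (-(b * t)) * (-(1 / (2 * b)) + (b * cos (2 * t) - 2 * sin (2 * t)) / (2 * (b ^ 2 + 4))) with hF
  have hderiv : ∀ t ∈ Ici y, HasDerivAt F (exp (-(b * t)) * sin t ^ 2) t := by
    intro t _
    have he : HasDerivAt (fun t : ℝ => exp (-(b * t))) (exp (-(b * t)) * -b) t := by
      simpa using (((hasDerivAt_id t).const_mul b).neg).exp
    have h2t : HasDerivAt (fun t : ℝ => 2 * t) 2 t := by
      simpa using (hasDerivAt_id t).const_mul 2
    have hcos : HasDerivAt (fun t : ℝ => cos (2 * t)) (-sin (2 * t) * 2) t := h2t.cos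
    have hsin : HasDerivAt (fun t : ℝ => sin (2 * t)) (cos (2 * t) * 2) t := h2t.sin
    have hg : HasDerivAt
        (fun t : ℝ => -(1 / (2 * b)) + (b * cos (2 * t) - 2 * sin (2 * t)) / (2 * (b ^ 2 + 4)))
        ((b * (-sin (2 * t) * 2) - 2 * (cos (2 * t) * 2)) / (2 * (b ^ 2 + 4))) t := by
      exact (((hcos.const_mul b).sub (hsin.const_mul 2)).div_const _).const_add _
    have := he.mul hg
    refine this.congr_deriv ?_
    have hb4 : (2 : ℝ) * (b ^ 2 + 4) ≠ 0 := by positivity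
    have hbne : b ≠ 0 := hb.ne'
    rw [Real.sin_sq_eq_half_sub]
    field_simp
    ring
  have hint : IntegrableOn (fun t => exp (-(b * t)) * sin t ^ 2) (Ioi y) := by
    refine Integrable.mono' (exp_neg_integrableOn_Ioi y hb) ?_ ?_
    · exact (((continuous_const.mul continuous_id).neg.rexp.mul
        (Real.continuous_sin.pow 2)).aestronglyMeasurable).restrict
    · filter_upwards with t
      rw [Real.norm_eq_abs, abs_of_nonneg (by positivity)]
      have h1 : sin t ^ 2 ≤ 1 := sin_sq_le_one t
      have h2 : (0:ℝ) < exp (-(b * t)) := exp_pos _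
      have : -b * t = -(b * t) := by ring
      rw [this]
      nlinarith
  have htend : Tendsto F atTop (𝓝 0) := by
    have h1 : Tendsto (fun t : ℝ => exp (-(b * t))) atTop (𝓝 0) := by
      have h0 : Tendsto (fun t : ℝ => -(b * t)) atTop atBot :=
        tendsto_neg_atBot_iff.mpr (Tendsto.const_mul_atTop hb tendsto_id)
      exact Real.tendsto_exp_atBot.comp h0
    set C : ℝ := 1 / (2 * b) + (b + 2) / (2 * (b ^ 2 + 4)) with hCdef
    have hC : ∀ t : ℝ, ‖F t‖ ≤ exp (-(b * t)) * C := by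
      intro t
      have hc := abs_cos_le_one (2 * t)
      have hs := abs_sin_le_one (2 * t)
      have hb4 : (0:ℝ) < 2 * (b ^ 2 + 4) := by positivity
      have hnum : |b * cos (2 * t) - 2 * sin (2 * t)| ≤ b + 2 := by
        refine (abs_sub _ _).trans ?_
        rw [abs_mul, abs_mul]
        have hbb : |b| = b := abs_of_pos hb
        have h2 : |(2:ℝ)| = 2 := by norm_num
        nlinarith [abs_nonneg (cos (2*t)), abs_nonneg (sin (2*t))]
      have hG : |(-(1 / (2 * b)) + (b * cos (2 * t) - 2 * sin (2 * t)) / (2 * (b ^ 2 + 4)))| ≤ C := by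
        refine (abs_add_le _ _).trans ?_
        rw [abs_neg, abs_of_pos (show (0:ℝ) < 1 / (2*b) by positivity),
          abs_div, abs_of_pos hb4, hCdef]
        gcongr
      rw [hF]
      simp only [Real.norm_eq_abs, abs_mul, Real.abs_exp]
      exact mul_le_mul_of_nonneg_left hG (exp_pos _).le
    have h2 : Tendsto (fun t : ℝ => exp (-(b * t)) * C) atTop (𝓝 (0 * C)) := h1.mul_const C
    rw [zero_mul] at h2
    exact squeeze_zero_norm hC h2
  have := integral_Ioi_of_hasDerivAt_of_tendsto' hderiv hint htend
  rw [this, hF]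
  simp only
  ring

/-- `(sin t / t)^2` is integrable on `(0,∞)`. -/
lemma intOn_sinc_sq : IntegrableOn (fun t : ℝ => (sin t / t) ^ 2) (Ioi 0) := by
  have hmeas : ∀ s : Set ℝ, AEStronglyMeasurable (fun t : ℝ => (sin t / t) ^ 2) (volume.restrict s) :=
    fun s => (((Real.measurable_sin.div measurable_id).pow_const 2).aestronglyMeasurable).restrict
  have h1 : IntegrableOn (fun t : ℝ => (sin t / t) ^ 2) (Ioc 0 1) := by
    refine Integrable.mono' (integrableOn_const (C := (1:ℝ)) measure_Ioc_lt_top.ne) (hmeas _) ?_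
    · filter_upwards [ae_restrict_mem measurableSet_Ioc] with t ht
      have ht0 : (0:ℝ) < t := ht.1
      have h : |sin t| ≤ |t| := Real.abs_sin_le_abs
      rw [abs_of_pos ht0] at h
      rw [Real.norm_eq_abs, abs_of_nonneg (sq_nonneg _)]
      have habs : |sin t / t| ≤ 1 := by
        rw [abs_div, abs_of_pos ht0, div_le_one ht0]; exact h
      calc (sin t / t) ^ 2 = |sin t / t| ^ 2 := (sq_abs _).symm
        _ ≤ 1 := by nlinarith [abs_nonneg (sin t / t)]
  have h2 : IntegrableOn (fun t : ℝ => (sin t / t) ^ 2) (Ioi 1) := by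
    refine Integrable.mono' (integrableOn_Ioi_rpow_of_lt (by norm_num : (-2:ℝ) < -1) one_pos)
      (hmeas _) ?_
    · filter_upwards [ae_restrict_mem measurableSet_Ioi] with t ht
      have ht1 : (1:ℝ) < t := ht
      have ht0 : (0:ℝ) < t := lt_trans one_pos ht1
      rw [Real.norm_eq_abs, abs_of_nonneg (by positivity)]
      rw [Real.rpow_neg ht0.le, show ((2:ℝ)) = ((2:ℕ):ℝ) by norm_num, Real.rpow_natCast]
      have hs : sin t ^ 2 ≤ 1 := sin_sq_le_one t
      rw [div_pow, div_le_iff₀ (by positivity)]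
      rw [inv_mul_cancel₀ (by positivity)]
      exact hs
  have := h1.union h2
  rwa [Set.Ioc_union_Ioi_eq_Ioi (by norm_num : (0:ℝ) ≤ 1)] at this

/-- `∫ x in (0,∞), 2/(x²+4) = π/2`. -/
lemma int_two_div : ∫ x in Ioi (0:ℝ), 2 / (x ^ 2 + 4) = π / 2 := by
  have hderiv : ∀ x ∈ Ici (0:ℝ), HasDerivAt (fun x : ℝ => arctan (x / 2)) (2 / (x ^ 2 + 4)) x := by
    intro x _
    have h := (Real.hasDerivAt_arctan (x / 2)).comp x ((hasDerivAt_id x).div_const 2)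
    refine h.congr_deriv ?_
    have : (0:ℝ) < 1 + (x / 2) ^ 2 := by positivity
    field_simp
    ring
  have hint : IntegrableOn (fun x : ℝ => 2 / (x ^ 2 + 4)) (Ioi 0) := by
    refine Integrable.mono' (integrable_inv_one_add_sq.const_mul 2).integrableOn ?_ ?_
    · exact ((continuous_const.div (by continuity) (fun x => by positivity)).aestronglyMeasurable).restrict
    · filter_upwards with x
      rw [Real.norm_eq_abs, abs_of_nonneg (by positivity), ← div_eq_mul_inv]
      have h1 : (0:ℝ) < 1 + x ^ 2 := by positivity
      have h2 : 1 + x ^ 2 ≤ x ^ 2 + 4 := by nlinarith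
      gcongr
  have htend : Tendsto (fun x : ℝ => arctan (x / 2)) atTop (𝓝 (π / 2)) := by
    have h1 : Tendsto (fun x : ℝ => x / 2) atTop atTop :=
      tendsto_id.atTop_div_const two_pos
    exact (tendsto_nhds_of_tendsto_nhdsWithin Real.tendsto_arctan_atTop).comp h1
  have := integral_Ioi_of_hasDerivAt_of_tendsto' hderiv hint htend
  rw [this]
  norm_num

noncomputable def F (t x : ℝ) : ℝ := x * exp (-(x * t)) * sin t ^ 2

noncomputable def g (y x : ℝ) : ℝ :=
  exp (-(x * y)) * (1 / 2) -
    exp (-(x * y)) * (x * (x * cos (2 * y) - 2 * sin (2 * y)) / (2 * (x ^ 2 + 4)))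

lemma exp_sin_sq_intOn {b : ℝ} (hb : 0 < b) (y : ℝ) :
    IntegrableOn (fun t : ℝ => exp (-(b * t)) * sin t ^ 2) (Ioi y) := by
  refine Integrable.mono' (exp_neg_integrableOn_Ioi y hb) ?_ ?_
  · exact (((continuous_const.mul continuous_id).neg.rexp.mul
      (Real.continuous_sin.pow 2)).aestronglyMeasurable).restrict
  · filter_upwards with t
    rw [Real.norm_eq_abs, abs_of_nonneg (by positivity), show -b * t = -(b * t) by ring]
    nlinarith [sin_sq_le_one t, exp_pos (-(b * t))]

/-- Inner integral in `t`. -/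
lemma inner_t {x : ℝ} (hx : 0 < x) (y : ℝ) :
    ∫ t in Ioi y, F t x = g y x := by
  have h := int_exp_sin_sq hx y
  have : ∫ t in Ioi y, F t x = x * ∫ t in Ioi y, exp (-(x * t)) * sin t ^ 2 := by
    rw [← integral_const_mul]
    refine setIntegral_congr_fun measurableSet_Ioi fun t _ => ?_
    unfold F; ring
  rw [this, h, g]
  have hx4 : (2:ℝ) * (x ^ 2 + 4) ≠ 0 := by positivity
  field_simp

/-- Inner integral in `x`. -/
lemma inner_x {t : ℝ} (ht : 0 < t) :
    ∫ x in Ioi (0:ℝ), F t x = (sin t / t) ^ 2 := by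
  have : ∫ x in Ioi (0:ℝ), F t x = (∫ x in Ioi (0:ℝ), x * exp (-(t * x))) * sin t ^ 2 := by
    rw [← integral_mul_const]
    refine setIntegral_congr_fun measurableSet_Ioi fun x _ => ?_
    unfold F; rw [mul_comm x t]
  rw [this, int_id_exp ht, div_pow]
  field_simp

lemma F_cont : Continuous (Function.uncurry F) := by
  unfold Function.uncurry F
  fun_prop

/-- The Tonelli swap. -/
lemma swap_eq {y : ℝ} (hy : 0 ≤ y) :
    ∫ t in Ioi y, (sin t / t) ^ 2 = ∫ x in Ioi (0:ℝ), g y x := by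
  have h1 : ∫ t in Ioi y, (sin t / t) ^ 2 = ∫ t in Ioi y, ∫ x in Ioi (0:ℝ), F t x := by
    refine setIntegral_congr_fun measurableSet_Ioi fun t ht => ?_
    exact (inner_x (lt_of_le_of_lt hy ht)).symm
  have hmeas : AEStronglyMeasurable (Function.uncurry F)
      ((volume.restrict (Ioi y)).prod (volume.restrict (Ioi 0))) :=
    F_cont.aestronglyMeasurable
  have hInt : Integrable (Function.uncurry F)
      ((volume.restrict (Ioi y)).prod (volume.restrict (Ioi 0))) := by
    rw [integrable_prod_iff hmeas]
    constructor
    · filter_upwards [ae_restrict_mem measurableSet_Ioi] with t ht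
      have ht0 : (0:ℝ) < t := lt_of_le_of_lt hy ht
      have : IntegrableOn (fun x : ℝ => x * exp (-(t * x)) * sin t ^ 2) (Ioi 0) :=
        (intOn_id_exp ht0).mul_const _
      refine this.congr_fun (fun x _ => ?_) measurableSet_Ioi
      simp only [Function.uncurry_apply_pair]
      unfold F; rw [mul_comm t x]
    · have base : IntegrableOn (fun t : ℝ => (sin t / t) ^ 2) (Ioi y) :=
        intOn_sinc_sq.mono_set (Ioi_subset_Ioi hy)
      refine base.congr ?_
      filter_upwards [ae_restrict_mem measurableSet_Ioi] with t ht
      simp only [Function.uncurry_apply_pair]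
      have ht0 : (0:ℝ) < t := lt_of_le_of_lt hy ht
      have : ∫ x in Ioi (0:ℝ), ‖F t x‖ = ∫ x in Ioi (0:ℝ), F t x := by
        refine setIntegral_congr_fun measurableSet_Ioi fun x hx => ?_
        have hx0 : (0:ℝ) < x := hx
        rw [Real.norm_eq_abs, abs_of_nonneg]
        unfold F; positivity
      rw [← inner_x ht0, ← this]
  have h2 := integral_integral_swap hInt
  rw [h1, h2]
  refine setIntegral_congr_fun measurableSet_Ioi fun x hx => inner_t hx y

/-- value of the whole integral. -/
lemma total_eq : ∫ t in Ioi (0:ℝ), (sin t / t) ^ 2 = π / 2 := by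
  rw [swap_eq le_rfl, ← int_two_div]
  refine setIntegral_congr_fun measurableSet_Ioi fun x _ => ?_
  unfold g
  rw [mul_zero, neg_zero, exp_zero, mul_zero, cos_zero, sin_zero]
  have : (2:ℝ) * (x ^ 2 + 4) ≠ 0 := by positivity
  field_simp
  ring

-- integrability of the first piece of g
lemma intOn_exp_half {y : ℝ} (hy : 0 < y) :
    IntegrableOn (fun x : ℝ => exp (-(x * y)) * (1 / 2)) (Ioi 0) := by
  refine (((exp_neg_integrableOn_Ioi 0 hy).mul_const (1/2)).congr ?_)
  filter_upwards with x
  rw [show -y * x = -(x * y) by ring]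

lemma int_exp_half {y : ℝ} (hy : 0 < y) :
    ∫ x in Ioi (0:ℝ), exp (-(x * y)) * (1 / 2) = 1 / (2 * y) := by
  have hderiv : ∀ x ∈ Ici (0:ℝ),
      HasDerivAt (fun x : ℝ => -exp (-(x * y)) / (2 * y)) (exp (-(x * y)) * (1 / 2)) x := by
    intro x _
    have he : HasDerivAt (fun x : ℝ => exp (-(x * y))) (exp (-(x * y)) * -y) x := by
      simpa using (((hasDerivAt_id x).mul_const y).neg).exp
    have := (he.neg).div_const (2 * y)
    refine this.congr_deriv ?_
    field_simp
  have htend : Tendsto (fun x : ℝ => -exp (-(x * y)) / (2 * y)) atTop (𝓝 0) := by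
    have h0 : Tendsto (fun x : ℝ => -(x * y)) atTop atBot :=
      tendsto_neg_atBot_iff.mpr (Tendsto.atTop_mul_const hy tendsto_id)
    have h1 : Tendsto (fun x : ℝ => exp (-(x * y))) atTop (𝓝 0) :=
      Real.tendsto_exp_atBot.comp h0
    have := (h1.neg).div_const (2 * y)
    simpa using this
  have := integral_Ioi_of_hasDerivAt_of_tendsto' hderiv (intOn_exp_half hy) htend
  rw [this]
  rw [zero_mul, neg_zero, exp_zero]
  field_simp
  ring

-- pointwise bound for the second piece
lemma q_bound {y : ℝ} (x : ℝ) (hx : 0 < x) :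
    |exp (-(x * y)) * (x * (x * cos (2 * y) - 2 * sin (2 * y)) / (2 * (x ^ 2 + 4)))|
      ≤ 1 / 4 * (x * exp (-(y * x))) := by
  have hpy := sin_sq_add_cos_sq (2 * y)
  set c := cos (2 * y); set s := sin (2 * y)
  have hnum : |x * c - 2 * s| ≤ (x ^ 2 + 4) / 2 := by
    rw [abs_le]
    constructor <;> nlinarith [sq_nonneg (x * s + 2 * c), sq_nonneg (x * s - 2 * c),
      sq_nonneg (x * c - 2 * s - 2), sq_nonneg (x * c - 2 * s + 2), sq_nonneg x]
  have hx4 : (0:ℝ) < 2 * (x ^ 2 + 4) := by positivity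
  rw [abs_mul, Real.abs_exp, abs_div, abs_of_pos hx4, abs_mul, abs_of_pos hx]
  rw [show -(x * y) = -(y * x) by ring]
  have h1 : x * |x * c - 2 * s| / (2 * (x ^ 2 + 4)) ≤ x / 4 := by
    rw [div_le_iff₀ hx4]
    calc x * |x * c - 2 * s| ≤ x * ((x ^ 2 + 4) / 2) := by
          exact mul_le_mul_of_nonneg_left hnum hx.le
      _ ≤ x / 4 * (2 * (x ^ 2 + 4)) := by ring_nf; nlinarith [sq_nonneg x]
  calc exp (-(y * x)) * (x * |x * c - 2 * s| / (2 * (x ^ 2 + 4)))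
      ≤ exp (-(y * x)) * (x / 4) := mul_le_mul_of_nonneg_left h1 (exp_pos _).le
    _ = 1 / 4 * (x * exp (-(y * x))) := by ring

lemma intOn_q {y : ℝ} (hy : 0 < y) :
    IntegrableOn (fun x : ℝ =>
      exp (-(x * y)) * (x * (x * cos (2 * y) - 2 * sin (2 * y)) / (2 * (x ^ 2 + 4)))) (Ioi 0) := by
  refine Integrable.mono' ((intOn_id_exp hy).const_mul (1 / 4)) ?_ ?_
  · apply Continuous.aestronglyMeasurable ?_ |>.restrict
    fun_prop (disch := intros; positivity)
  · filter_upwards [ae_restrict_mem measurableSet_Ioi] with x hx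
    exact q_bound x hx

noncomputable def S (y : ℝ) : ℝ :=
  ∫ x in Ioi (0:ℝ), exp (-(x * y)) * (x * (x * cos (2 * y) - 2 * sin (2 * y)) / (2 * (x ^ 2 + 4)))

lemma S_bound {y : ℝ} (hy : 0 < y) : |S y| ≤ 1 / (4 * y ^ 2) := by
  have h0 : |S y| ≤ ∫ x in Ioi (0:ℝ),
      ‖exp (-(x * y)) * (x * (x * cos (2 * y) - 2 * sin (2 * y)) / (2 * (x ^ 2 + 4)))‖ := by
    rw [← Real.norm_eq_abs]
    exact norm_integral_le_integral_norm _
  have h1 : (∫ x in Ioi (0:ℝ),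
        ‖exp (-(x * y)) * (x * (x * cos (2 * y) - 2 * sin (2 * y)) / (2 * (x ^ 2 + 4)))‖)
      ≤ ∫ x in Ioi (0:ℝ), 1 / 4 * (x * exp (-(y * x))) := by
    refine integral_mono_of_nonneg (Filter.Eventually.of_forall fun x => norm_nonneg _)
      ((intOn_id_exp hy).const_mul (1 / 4)) ?_
    filter_upwards [ae_restrict_mem measurableSet_Ioi] with x hx
    rw [Real.norm_eq_abs]
    exact q_bound x hx
  have h1 := h0.trans h1
  rw [MeasureTheory.integral_const_mul, int_id_exp hy] at h1
  calc |S y| ≤ 1 / 4 * (1 / y ^ 2) := h1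
    _ = 1 / (4 * y ^ 2) := by ring

lemma tail_eq {y : ℝ} (hy : 0 < y) :
    ∫ t in Ioi y, (sin t / t) ^ 2 = 1 / (2 * y) - S y := by
  rw [swap_eq hy.le]
  unfold g
  rw [integral_sub (intOn_exp_half hy) (intOn_q hy), int_exp_half hy]
  rfl

theorem main (y : ℝ) (hy : 0 < y) :
    ∃ θ : ℝ, θ ∈ Set.Icc (-1 : ℝ) 1 ∧
      ∫ t in (0:ℝ)..y, (Real.sin t / t) ^ 2 = π / 2 - 1 / (2 * y) + θ / (4 * y ^ 2) := by
  refine ⟨4 * y ^ 2 * S y, ?_, ?_⟩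
  · have hb := S_bound hy
    have h4 : (0:ℝ) < 4 * y ^ 2 := by positivity
    rw [Set.mem_Icc, ← abs_le]
    rw [abs_mul, abs_of_pos h4]
    calc 4 * y ^ 2 * |S y| ≤ 4 * y ^ 2 * (1 / (4 * y ^ 2)) :=
        mul_le_mul_of_nonneg_left hb h4.le
      _ = 1 := by field_simp
  · have hsplit : ∫ t in Ioc (0:ℝ) y, (sin t / t) ^ 2
        = (∫ t in Ioi (0:ℝ), (sin t / t) ^ 2) - ∫ t in Ioi y, (sin t / t) ^ 2 := by
      have hunion : Ioc (0:ℝ) y ∪ Ioi y = Ioi 0 := Ioc_union_Ioi_eq_Ioi hy.le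
      have hdisj : Disjoint (Ioc (0:ℝ) y) (Ioi y) := Ioc_disjoint_Ioi le_rfl
      have := setIntegral_union hdisj measurableSet_Ioi
        (intOn_sinc_sq.mono_set (by rw [← hunion]; exact subset_union_left))
        (intOn_sinc_sq.mono_set (by rw [← hunion]; exact subset_union_right))
      rw [hunion] at this
      rw [this]; ring
    rw [intervalIntegral.integral_of_le hy.le, hsplit, total_eq, tail_eq hy]
    have h4 : (4:ℝ) * y ^ 2 ≠ 0 := by positivity
    field_simp
    ring


end TailSinAux

theorem tail_integral_sin_sq (y : ℝ) (hy : 0 < y) :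
    ∃ θ : ℝ, θ ∈ Set.Icc (-1 : ℝ) 1 ∧
      ∫ t in (0:ℝ)..y, (Real.sin t / t) ^ 2 = π / 2 - 1 / (2 * y) + θ / (4 * y ^ 2) := by
  exact main y hy
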